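/- Let (j₁,k₁) and (j₂,k₂) be distinct pairs with λ_{jᵢ,kᵢ} = kᵢ² + ω − √(jᵢ²Ω² + ω²) satisfying |λ_{jᵢ,kᵢ}| ≤ d₀. Then for d₀ sufficiently small there exists a constant C > 0 (depending only on Ω, ω) such that |j₁ − j₂| ≥ C|k₁ + k₂|. -/
import Mathlib


open Real

/-- Lipschitz upper bound for the dispersion relation, ordered version. -/
lemma sqrt_disp_lip (Ω ω a b : ℝ) (hΩ : 0 < Ω) (hω : 0 < ω)
    (hb : 0 ≤ b) (hab : b ≤ a) :
    Real.sqrt (a^2 * Ω^2 + ω^2) - Real.sqrt (b^2 * Ω^2 + ω^2) ≤ Ω * (a - b) := by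
  have hBnn : (0:ℝ) ≤ b^2 * Ω^2 + ω^2 := by positivity
  have hs2 : (Real.sqrt (b^2 * Ω^2 + ω^2))^2 = b^2 * Ω^2 + ω^2 := Real.sq_sqrt hBnn
  have hslb : b * Ω ≤ Real.sqrt (b^2 * Ω^2 + ω^2) := by
    have : Real.sqrt ((b*Ω)^2) ≤ Real.sqrt (b^2 * Ω^2 + ω^2) := by
      apply Real.sqrt_le_sqrt; nlinarith
    rwa [Real.sqrt_sq (by positivity)] at this
  have hsnn : 0 ≤ Real.sqrt (b^2 * Ω^2 + ω^2) := Real.sqrt_nonneg _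
  have ht : 0 ≤ Ω * (a - b) := mul_nonneg hΩ.le (by linarith)
  have key : Real.sqrt (a^2 * Ω^2 + ω^2)
      ≤ Real.sqrt (b^2 * Ω^2 + ω^2) + Ω * (a - b) := by
    have h1 : Real.sqrt (a^2 * Ω^2 + ω^2)
        ≤ Real.sqrt ((Real.sqrt (b^2 * Ω^2 + ω^2) + Ω * (a - b))^2) := by
      apply Real.sqrt_le_sqrt
      have hmul := mul_le_mul_of_nonneg_right hslb ht
      nlinarith [hmul, hs2]
    rwa [Real.sqrt_sq (by linarith)] at h1
  linarith

/-- Lipschitz bound, absolute value version. -/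
lemma sqrt_disp_abs (Ω ω a b : ℝ) (hΩ : 0 < Ω) (hω : 0 < ω)
    (ha : 0 ≤ a) (hb : 0 ≤ b) :
    |Real.sqrt (a^2 * Ω^2 + ω^2) - Real.sqrt (b^2 * Ω^2 + ω^2)| ≤ Ω * |a - b| := by
  rcases le_total b a with h | h
  · have hsq : b^2 ≤ a^2 := by nlinarith
    have hmono : Real.sqrt (b^2 * Ω^2 + ω^2) ≤ Real.sqrt (a^2 * Ω^2 + ω^2) := by
      apply Real.sqrt_le_sqrt
      nlinarith [mul_le_mul_of_nonneg_right hsq (sq_nonneg Ω)]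
    rw [abs_of_nonneg (by linarith), abs_of_nonneg (by linarith)]
    exact sqrt_disp_lip Ω ω a b hΩ hω hb h
  · have hsq : a^2 ≤ b^2 := by nlinarith
    have hmono : Real.sqrt (a^2 * Ω^2 + ω^2) ≤ Real.sqrt (b^2 * Ω^2 + ω^2) := by
      apply Real.sqrt_le_sqrt
      nlinarith [mul_le_mul_of_nonneg_right hsq (sq_nonneg Ω)]
    rw [abs_of_nonpos (by linarith), abs_of_nonpos (by linarith)]
    have := sqrt_disp_lip Ω ω b a hΩ hω ha h
    linarith

/-- Lower bound: consecutive sqrt gaps are bounded below. -/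
lemma sqrt_disp_gap (Ω ω a b : ℝ) (hΩ : 0 < Ω) (hω : 0 < ω)
    (hb : 1 ≤ b) (hab : b + 1 ≤ a) :
    Ω^2 / (Ω + ω) ≤ Real.sqrt (a^2 * Ω^2 + ω^2) - Real.sqrt (b^2 * Ω^2 + ω^2) := by
  set s₁ := Real.sqrt (a^2 * Ω^2 + ω^2) with hs1def
  set s₂ := Real.sqrt (b^2 * Ω^2 + ω^2) with hs2def
  have hA : (0:ℝ) ≤ a^2 * Ω^2 + ω^2 := by positivity
  have hB : (0:ℝ) ≤ b^2 * Ω^2 + ω^2 := by positivity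
  have h1 : s₁^2 = a^2 * Ω^2 + ω^2 := Real.sq_sqrt hA
  have h2 : s₂^2 = b^2 * Ω^2 + ω^2 := Real.sq_sqrt hB
  have hs1nn : 0 ≤ s₁ := Real.sqrt_nonneg _
  have hs2nn : 0 ≤ s₂ := Real.sqrt_nonneg _
  have ha1 : (1:ℝ) ≤ a := by linarith
  have hub1 : s₁ ≤ a * Ω + ω := by
    rw [hs1def]
    have h1' : Real.sqrt (a^2 * Ω^2 + ω^2) ≤ Real.sqrt ((a*Ω+ω)^2) := by
      apply Real.sqrt_le_sqrt
      nlinarith [mul_nonneg (mul_nonneg (by linarith : (0:ℝ) ≤ a) hΩ.le) hω.le]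
    rwa [Real.sqrt_sq (by nlinarith)] at h1'
  have hub2 : s₂ ≤ b * Ω + ω := by
    rw [hs2def]
    have h2' : Real.sqrt (b^2 * Ω^2 + ω^2) ≤ Real.sqrt ((b*Ω+ω)^2) := by
      apply Real.sqrt_le_sqrt
      nlinarith [mul_nonneg (mul_nonneg (by linarith : (0:ℝ) ≤ b) hΩ.le) hω.le]
    rwa [Real.sqrt_sq (by nlinarith)] at h2'
  have hsum : 0 < s₁ + s₂ := by
    have : 0 < s₂ := Real.sqrt_pos.mpr (by positivity)
    linarith
  have hprod : (s₁ - s₂) * (s₁ + s₂) = (a^2 - b^2) * Ω^2 := by nlinarith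
  have hΩω : 0 < Ω + ω := by linarith
  rw [div_le_iff₀ hΩω]
  have hsumub : s₁ + s₂ ≤ (a + b) * (Ω + ω) := by nlinarith
  have hab0 : (1:ℝ) * (a + b) ≤ (a - b) * (a + b) :=
    mul_le_mul_of_nonneg_right (by linarith) (by linarith)
  have hk2 : a + b ≤ a^2 - b^2 := by nlinarith
  have hkey : (a + b) * Ω^2 ≤ (a^2 - b^2) * Ω^2 :=
    mul_le_mul_of_nonneg_right hk2 (sq_nonneg Ω)
  have hstep1 : Ω^2 * (s₁ + s₂) ≤ Ω^2 * ((a + b) * (Ω + ω)) :=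
    mul_le_mul_of_nonneg_left hsumub (sq_nonneg Ω)
  have hstep2 : (a + b) * Ω^2 * (Ω + ω) ≤ (a^2 - b^2) * Ω^2 * (Ω + ω) :=
    mul_le_mul_of_nonneg_right hkey hΩω.le
  have hfinal : Ω^2 * (s₁ + s₂) ≤ (s₁ - s₂) * (Ω + ω) * (s₁ + s₂) := by nlinarith
  have := le_of_mul_le_mul_right (by linarith : Ω^2 * (s₁ + s₂) ≤ ((s₁ - s₂) * (Ω + ω)) * (s₁ + s₂)) hsum
  linarith

/-- Separation of singular sites: there exist `d₀ > 0` and `C > 0` such that any two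
distinct singular sites `(j₁,k₁) ≠ (j₂,k₂)` (with `|λ_{jᵢ,kᵢ}| ≤ d₀`,
`λ_{j,k} = k² + ω − √(j²Ω² + ω²)`) satisfy `|j₁ − j₂| ≥ C|k₁ + k₂|`. -/
theorem stmt_15 (Ω ω : ℝ) (hΩ : 0 < Ω) (hω : 0 < ω) :
    ∃ d₀ > (0:ℝ), ∃ C > (0:ℝ),
      ∀ (j₁ k₁ j₂ k₂ : ℕ), 1 ≤ j₁ → 1 ≤ j₂ → (j₁, k₁) ≠ (j₂, k₂) →
        |(k₁ : ℝ)^2 + ω - Real.sqrt ((j₁ : ℝ)^2 * Ω^2 + ω^2)| ≤ d₀ →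
        |(k₂ : ℝ)^2 + ω - Real.sqrt ((j₂ : ℝ)^2 * Ω^2 + ω^2)| ≤ d₀ →
        C * |(k₁ : ℝ) + (k₂ : ℝ)| ≤ |(j₁ : ℝ) - (j₂ : ℝ)| := by
  have hΩω : 0 < Ω + ω := by linarith
  refine ⟨min (1/4) (Ω^2 / (4*(Ω+ω))), by positivity, 1/(Ω+1), by positivity, ?_⟩
  intro j₁ k₁ j₂ k₂ hj₁ hj₂ hne h₁ h₂
  set d₀ := min (1/4) (Ω^2 / (4*(Ω+ω))) with hd₀
  have hd₀q : d₀ ≤ 1/4 := min_le_left _ _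
  have hd₀Ω : d₀ ≤ Ω^2 / (4*(Ω+ω)) := min_le_right _ _
  have hd₀pos : 0 < d₀ := by rw [hd₀]; positivity
  set s₁ := Real.sqrt ((j₁:ℝ)^2 * Ω^2 + ω^2) with hs1
  set s₂ := Real.sqrt ((j₂:ℝ)^2 * Ω^2 + ω^2) with hs2
  have ha1 : (1:ℝ) ≤ (j₁:ℝ) := by exact_mod_cast hj₁
  have hb1 : (1:ℝ) ≤ (j₂:ℝ) := by exact_mod_cast hj₂
  have h1a := abs_le.mp h₁
  have h2a := abs_le.mp h₂
  by_cases hk : k₁ = k₂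
  · -- equal k's force equal j's via the gap lemma: contradiction
    exfalso
    subst hk
    have hj : j₁ ≠ j₂ := fun h => hne (by rw [h])
    have hdiff : |s₁ - s₂| ≤ 2 * d₀ := by
      rw [abs_le]
      constructor <;> linarith [h1a.1, h1a.2, h2a.1, h2a.2]
    have hgap : Ω^2 / (Ω + ω) ≤ |s₁ - s₂| := by
      rcases lt_or_gt_of_ne hj with h | h
      · have hab : (j₁:ℝ) + 1 ≤ (j₂:ℝ) := by exact_mod_cast h
        have := sqrt_disp_gap Ω ω (j₂:ℝ) (j₁:ℝ) hΩ hω ha1 hab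
        rw [← hs1, ← hs2] at this
        calc Ω^2/(Ω+ω) ≤ s₂ - s₁ := this
          _ ≤ |s₂ - s₁| := le_abs_self _
          _ = |s₁ - s₂| := abs_sub_comm _ _
      · have hab : (j₂:ℝ) + 1 ≤ (j₁:ℝ) := by exact_mod_cast h
        have := sqrt_disp_gap Ω ω (j₁:ℝ) (j₂:ℝ) hΩ hω hb1 hab
        rw [← hs1, ← hs2] at this
        calc Ω^2/(Ω+ω) ≤ s₁ - s₂ := this
          _ ≤ |s₁ - s₂| := le_abs_self _
    have hle : Ω^2 / (Ω + ω) ≤ 2 * (Ω^2 / (4*(Ω+ω))) := by linarith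
    have heq : 2 * (Ω^2 / (4*(Ω+ω))) = (Ω^2 / (Ω+ω)) / 2 := by
      field_simp; ring
    have hpos : 0 < Ω^2 / (Ω + ω) := by positivity
    linarith [hle, heq ▸ hle]
  · -- k₁ ≠ k₂
    have hx0 : 0 ≤ (k₁:ℝ) := by positivity
    have hy0 : 0 ≤ (k₂:ℝ) := by positivity
    have hxynn : 0 ≤ (k₁:ℝ) + (k₂:ℝ) := by positivity
    have habs1 : (1:ℝ) ≤ |(k₁:ℝ) - (k₂:ℝ)| := by
      have hz : (1:ℤ) ≤ |(k₁:ℤ) - (k₂:ℤ)| :=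
        Int.one_le_abs (sub_ne_zero.mpr (by exact_mod_cast hk))
      exact_mod_cast hz
    have hxy1 : (1:ℝ) ≤ (k₁:ℝ) + (k₂:ℝ) := by
      have : |(k₁:ℝ) - (k₂:ℝ)| ≤ (k₁:ℝ) + (k₂:ℝ) := abs_le.mpr ⟨by linarith, by linarith⟩
      linarith
    have hlip : |s₁ - s₂| ≤ Ω * |(j₁:ℝ) - (j₂:ℝ)| := by
      have := sqrt_disp_abs Ω ω (j₁:ℝ) (j₂:ℝ) hΩ hω (by linarith) (by linarith)
      rwa [← hs1, ← hs2] at this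
    have hsq : |(k₁:ℝ)^2 - (k₂:ℝ)^2| ≤ Ω * |(j₁:ℝ) - (j₂:ℝ)| + 2 * d₀ := by
      have hsplit : (k₁:ℝ)^2 - (k₂:ℝ)^2 = ((k₁:ℝ)^2 + ω - s₁) - ((k₂:ℝ)^2 + ω - s₂) + (s₁ - s₂) := by ring
      have h3 : |(k₁:ℝ)^2 - (k₂:ℝ)^2| ≤ |(k₁:ℝ)^2 + ω - s₁| + |(k₂:ℝ)^2 + ω - s₂| + |s₁ - s₂| := by
        rw [hsplit]
        calc |(k₁:ℝ)^2 + ω - s₁ - ((k₂:ℝ)^2 + ω - s₂) + (s₁ - s₂)|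
            ≤ |(k₁:ℝ)^2 + ω - s₁ - ((k₂:ℝ)^2 + ω - s₂)| + |s₁ - s₂| := abs_add_le _ _
          _ ≤ |(k₁:ℝ)^2 + ω - s₁| + |(k₂:ℝ)^2 + ω - s₂| + |s₁ - s₂| := by
              gcongr; exact abs_sub _ _
      linarith
    have hfac : (k₁:ℝ) + (k₂:ℝ) ≤ |(k₁:ℝ)^2 - (k₂:ℝ)^2| := by
      have heq2 : |(k₁:ℝ)^2 - (k₂:ℝ)^2| = |(k₁:ℝ) - (k₂:ℝ)| * ((k₁:ℝ) + (k₂:ℝ)) := by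
        rw [show (k₁:ℝ)^2 - (k₂:ℝ)^2 = ((k₁:ℝ) - (k₂:ℝ)) * ((k₁:ℝ) + (k₂:ℝ)) by ring, abs_mul,
          abs_of_nonneg hxynn]
      rw [heq2]
      nlinarith
    have hjne : j₁ ≠ j₂ := by
      intro h
      have hcast : (j₁:ℝ) = (j₂:ℝ) := by exact_mod_cast h
      have h0 : |(j₁:ℝ) - (j₂:ℝ)| = 0 := by rw [hcast, sub_self, abs_zero]
      rw [h0, mul_zero, zero_add] at hsq
      linarith
    have habj : (1:ℝ) ≤ |(j₁:ℝ) - (j₂:ℝ)| := by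
      have hz : (1:ℤ) ≤ |(j₁:ℤ) - (j₂:ℤ)| :=
        Int.one_le_abs (sub_ne_zero.mpr (by exact_mod_cast hjne))
      exact_mod_cast hz
    have hΩmul : Ω * 1 ≤ Ω * |(j₁:ℝ) - (j₂:ℝ)| := by
      exact mul_le_mul_of_nonneg_left habj hΩ.le
    rw [abs_of_nonneg hxynn, div_mul_eq_mul_div, one_mul,
      div_le_iff₀ (by linarith : (0:ℝ) < Ω + 1)]
    have hring : |(j₁:ℝ) - (j₂:ℝ)| * (Ω + 1) = Ω * |(j₁:ℝ) - (j₂:ℝ)| + |(j₁:ℝ) - (j₂:ℝ)| := by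
      ring
    rw [hring]
    linarith
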